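/- Let G be a finite connected simple graph with a full-dimensional hypercube isometry μ : V → {0,1}^τ, and let M be any matching in the semicube graph Sc(G). Then there exists an isometric embedding λ : V → ℤ^d of G into the integer lattice with d = τ − |M|. -/

import Mathlib

/-- The semicube `S_{i,χ} = {v | μ_i(v) = χ}` of a hypercube embedding `μ`. -/
def semicube {V ι : Type*} (μ : V → ι → Bool) (i : ι) (χ : Bool) : Set V :=
  {v | μ v i = χ}

/-- The semicube graph `Sc(G)`: vertices are the pairs `(i,χ)` (representing the
semicubes `S_{i,χ}`), with an edge between two distinct pairs exactly when the
corresponding semicubes cover all vertices and intersect nontrivially. -/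
def semicubeGraph {V ι : Type*} (μ : V → ι → Bool) : SimpleGraph (ι × Bool) where
  Adj p q := p ≠ q ∧
    semicube μ p.1 p.2 ∪ semicube μ q.1 q.2 = Set.univ ∧
    (semicube μ p.1 p.2 ∩ semicube μ q.1 q.2).Nonempty
  symm := by
    constructor
    rintro p q ⟨h1, h2, h3⟩
    exact ⟨h1.symm, by rwa [Set.union_comm], by rwa [Set.inter_comm]⟩
  loopless := by constructor; rintro p ⟨h1, -⟩; exact h1 rfl

/-- `M` is a matching in the graph `H`: a finite set of edges of `H`,
no two of which share an endpoint. -/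
def IsMatchingIn {α : Type*} (H : SimpleGraph α) (M : Finset (Sym2 α)) : Prop :=
  (∀ e ∈ M, e ∈ H.edgeSet) ∧
    ∀ e ∈ M, ∀ f ∈ M, e ≠ f → ∀ a, a ∈ e → a ∉ f

/-- Auxiliary structure: a "chain coordinate" built from a set `I` of original
hypercube coordinates.  `f` is the value (a sum of indicators of a nested chain of
`I.card` semicubes), `p` is the top semicube of the chain and `q` the bottom one. -/
structure ChainAux (V : Type*) (τ : ℕ) where
  f : V → ℕ
  p : Fin τ × Bool
  q : Fin τ × Bool
  I : Finset (Fin τ)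

namespace ChainAux

variable {V : Type*} {τ : ℕ}

def Good (μ : V → Fin τ → Bool) (c : ChainAux V τ) : Prop :=
  c.I.Nonempty ∧
  (∀ v, μ v c.q.1 = c.q.2 → c.f v = c.I.card) ∧
  (∀ v, μ v c.p.1 ≠ c.p.2 → c.f v = 0) ∧
  (∀ v, c.f v ≤ c.I.card)

def flip (c : ChainAux V τ) : ChainAux V τ :=
  ⟨fun v => c.I.card - c.f v, (c.q.1, !c.q.2), (c.p.1, !c.p.2), c.I⟩

@[simp] lemma flip_I (c : ChainAux V τ) : c.flip.I = c.I := rfl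
@[simp] lemma flip_p (c : ChainAux V τ) : c.flip.p = (c.q.1, !c.q.2) := rfl
@[simp] lemma flip_q (c : ChainAux V τ) : c.flip.q = (c.p.1, !c.p.2) := rfl
@[simp] lemma flip_f (c : ChainAux V τ) (v : V) : c.flip.f v = c.I.card - c.f v := rfl

lemma bool_eq_not {a b : Bool} (h : a = !b) : a ≠ b := by cases b <;> simp_all
lemma bool_ne_not {a b : Bool} (h : a ≠ !b) : a = b := by cases b <;> simp_all
lemma bool_ne {a b : Bool} (h : a ≠ b) : a = !b := by cases b <;> simp_all

lemma flip_good {μ : V → Fin τ → Bool} {c : ChainAux V τ} (h : Good μ c) :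
    Good μ c.flip := by
  obtain ⟨hne, hq, hp, hb⟩ := h
  refine ⟨hne, ?_, ?_, fun v => Nat.sub_le _ _⟩
  · intro v hv
    have h0 : c.f v = 0 := hp v (bool_eq_not hv)
    simp [flip, h0]
  · intro v hv
    have h0 : c.f v = c.I.card := hq v (bool_ne_not hv)
    simp [flip, h0]

lemma flip_abs {μ : V → Fin τ → Bool} {c : ChainAux V τ} (h : Good μ c) (u v : V) :
    |(c.flip.f u : ℤ) - c.flip.f v| = |(c.f u : ℤ) - c.f v| := by
  obtain ⟨hne, hq, hp, hb⟩ := h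
  have hu := hb u; have hv := hb v
  simp only [flip_f]
  rw [Nat.cast_sub hu, Nat.cast_sub hv]
  rw [show ((c.I.card : ℤ) - c.f u) - ((c.I.card : ℤ) - c.f v) = -((c.f u : ℤ) - c.f v) by ring,
    abs_neg]

def merge (c d : ChainAux V τ) : ChainAux V τ :=
  ⟨fun v => c.f v + d.f v, c.p, d.q, c.I ∪ d.I⟩

lemma merge_card {c d : ChainAux V τ} (hdisj : Disjoint c.I d.I) :
    (merge c d).I.card = c.I.card + d.I.card := Finset.card_union_of_disjoint hdisj

lemma merge_good {μ : V → Fin τ → Bool} {c d : ChainAux V τ}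
    (hc : Good μ c) (hd : Good μ d) (hdisj : Disjoint c.I d.I)
    (hlink : ∀ v, μ v d.p.1 = d.p.2 → μ v c.q.1 = c.q.2) :
    Good μ (merge c d) := by
  obtain ⟨hcne, hcq, hcp, hcb⟩ := hc
  obtain ⟨hdne, hdq, hdp, hdb⟩ := hd
  have hcard := merge_card hdisj
  have hcpos := Finset.card_pos.mpr hcne
  have hdpos := Finset.card_pos.mpr hdne
  refine ⟨?_, ?_, ?_, ?_⟩
  · exact hcne.mono Finset.subset_union_left
  · intro v hv
    have h1 : d.f v = d.I.card := hdq v hv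
    have h2 : μ v d.p.1 = d.p.2 := by
      by_contra h
      have := hdp v h
      omega
    have h3 : c.f v = c.I.card := hcq v (hlink v h2)
    show c.f v + d.f v = _
    rw [hcard]; omega
  · intro v hv
    have h1 : c.f v = 0 := hcp v hv
    have h2 : μ v d.p.1 ≠ d.p.2 := by
      intro h
      have := hcq v (hlink v h)
      omega
    have h3 : d.f v = 0 := hdp v h2
    show c.f v + d.f v = 0
    omega
  · intro v
    have := hcb v; have := hdb v
    show c.f v + d.f v ≤ _
    rw [hcard]; omega

lemma abs_add_eq {a b : ℤ} (h1 : 0 < b → 0 ≤ a) (h2 : b < 0 → a ≤ 0) :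
    |a + b| = |a| + |b| := by
  rcases lt_trichotomy b 0 with hb | hb | hb
  · have ha := h2 hb
    rw [abs_of_nonpos ha, abs_of_nonpos hb.le, abs_of_nonpos (by omega)]; ring
  · simp [hb]
  · have ha := h1 hb
    rw [abs_of_nonneg ha, abs_of_nonneg hb.le, abs_of_nonneg (by omega)]

lemma merge_abs {μ : V → Fin τ → Bool} {c d : ChainAux V τ}
    (hc : Good μ c) (hd : Good μ d)
    (hlink : ∀ v, μ v d.p.1 = d.p.2 → μ v c.q.1 = c.q.2) (u v : V) :
    |((merge c d).f u : ℤ) - (merge c d).f v|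
      = |(c.f u : ℤ) - c.f v| + |(d.f u : ℤ) - d.f v| := by
  obtain ⟨hcne, hcq, hcp, hcb⟩ := hc
  obtain ⟨hdne, hdq, hdp, hdb⟩ := hd
  -- if d.f w ≥ 1 then c.f w = c.I.card
  have key : ∀ w, 1 ≤ d.f w → c.f w = c.I.card := by
    intro w hw
    have h2 : μ w d.p.1 = d.p.2 := by
      by_contra h
      have := hdp w h
      omega
    exact hcq w (hlink w h2)
  show |((c.f u + d.f u : ℕ) : ℤ) - ((c.f v + d.f v : ℕ) : ℤ)| = _
  push_cast
  rw [show ((c.f u : ℤ) + d.f u) - ((c.f v : ℤ) + d.f v)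
      = ((c.f u : ℤ) - c.f v) + ((d.f u : ℤ) - d.f v) by ring]
  apply abs_add_eq
  · intro hb
    have h1 : 1 ≤ d.f u := by omega
    have := key u h1
    have := hcb v
    omega
  · intro hb
    have h1 : 1 ≤ d.f v := by omega
    have := key v h1
    have := hcb u
    omega

end ChainAux

namespace ChainAux

variable {V : Type*} {τ : ℕ}

@[simp] lemma merge_f (c d : ChainAux V τ) (v : V) : (merge c d).f v = c.f v + d.f v := rfl
@[simp] lemma merge_p (c d : ChainAux V τ) : (merge c d).p = c.p := rfl
@[simp] lemma merge_q (c d : ChainAux V τ) : (merge c d).q = d.q := rfl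
@[simp] lemma merge_I (c d : ChainAux V τ) : (merge c d).I = c.I ∪ d.I := rfl

lemma main (μ : V → Fin τ → Bool) :
    ∀ (n : ℕ) (M : Finset (Sym2 (Fin τ × Bool))) (L : List (ChainAux V τ)),
    M.card = n →
    (∀ c ∈ L, Good μ c) →
    List.Pairwise (fun a b => Disjoint a.I b.I) L →
    (∀ i : Fin τ, ∃ c ∈ L, i ∈ c.I) →
    (∀ e ∈ M, e ∈ (semicubeGraph μ).edgeSet) →
    (∀ e ∈ M, ∀ f ∈ M, e ≠ f → ∀ a, a ∈ e → a ∉ f) →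
    (∀ e ∈ M, ∀ z, z ∈ e → ∀ c ∈ L, z.1 ∈ c.I → (z = c.q ∨ z = (c.p.1, !c.p.2))) →
    ∃ L' : List (ChainAux V τ), L'.length + M.card = L.length ∧
      ∀ u v : V, (L'.map (fun c => |(c.f u : ℤ) - c.f v|)).sum
        = (L.map (fun c => |(c.f u : ℤ) - c.f v|)).sum := by
  intro n
  induction n with
  | zero =>
    intro M L hcard _ _ _ _ _ _
    exact ⟨L, by omega, fun u v => rfl⟩
  | succ n ih =>
    intro M L hcard hgood hdisj hcover hedge hmatch hattach
    classical
    obtain ⟨e, he⟩ := Finset.card_pos.mp (show 0 < M.card by omega)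
    revert he
    induction e using Sym2.ind with
    | _ x y =>
    intro he
    have hadj : (semicubeGraph μ).Adj x y := (SimpleGraph.mem_edgeSet (semicubeGraph μ)).mp (hedge _ he)
    obtain ⟨hne, hun, hint⟩ := hadj
    have huniv : ∀ v : V, μ v y.1 ≠ y.2 → μ v x.1 = x.2 := by
      intro v hv
      have hv2 : v ∈ semicube μ x.1 x.2 ∪ semicube μ y.1 y.2 :=
        Set.eq_univ_iff_forall.mp hun v
      rcases hv2 with h | h
      · exact h
      · exact absurd h hv
    obtain ⟨c, hcL, hci⟩ := hcover x.1
    obtain ⟨d, hdL, hdi⟩ := hcover y.1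
    have hxq := hattach _ he x (Sym2.mem_mk_left x y) c hcL hci
    have hyq := hattach _ he y (Sym2.mem_mk_right x y) d hdL hdi
    have hcd : c ≠ d := by
      rintro rfl
      obtain ⟨v, hvx, hvy⟩ := hint
      have h1 : μ v x.1 = x.2 := hvx
      have h2 : μ v y.1 = y.2 := hvy
      obtain ⟨hne', hq, hp, hb⟩ := hgood c hcL
      have hpos := Finset.card_pos.mpr hne'
      rcases hxq with hx | hx <;> rcases hyq with hy | hy
      · exact hne (hx.trans hy.symm)
      · rw [hx] at h1
        rw [hy] at h2
        have e1 := hq v h1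
        have e2 := hp v (bool_eq_not h2)
        omega
      · rw [hx] at h1
        rw [hy] at h2
        have e1 := hq v h2
        have e2 := hp v (bool_eq_not h1)
        omega
      · exact hne (hx.trans hy.symm)
    have hdL' : d ∈ L.erase c := (List.mem_erase_of_ne hcd.symm).mpr hdL
    have P : L.Perm (c :: d :: (L.erase c).erase d) :=
      (List.perm_cons_erase hcL).trans (List.Perm.cons c (List.perm_cons_erase hdL'))
    set L₀ := (L.erase c).erase d with hL₀
    have hmemP : ∀ a, a ∈ L ↔ a ∈ c :: d :: L₀ := fun a => P.mem_iff
    have hdisj2 : List.Pairwise (fun a b => Disjoint a.I b.I) (c :: d :: L₀) :=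
      (List.Perm.pairwise_iff (fun h => h.symm) P).mp hdisj
    obtain ⟨hhd1, hdisj3⟩ := List.pairwise_cons.mp hdisj2
    obtain ⟨hhd2, hdisj4⟩ := List.pairwise_cons.mp hdisj3
    have hcdDisj : Disjoint c.I d.I := hhd1 d List.mem_cons_self
    -- orientation
    set c₁ := if x = c.q then c else c.flip with hc1def
    set d₁ := if y = (d.p.1, !d.p.2) then d else d.flip with hd1def
    have hc₁good : Good μ c₁ := by
      rw [hc1def]; split_ifs
      · exact hgood c hcL
      · exact flip_good (hgood c hcL)
    have hd₁good : Good μ d₁ := by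
      rw [hd1def]; split_ifs
      · exact hgood d hdL
      · exact flip_good (hgood d hdL)
    have hc₁I : c₁.I = c.I := by rw [hc1def]; split_ifs <;> rfl
    have hd₁I : d₁.I = d.I := by rw [hd1def]; split_ifs <;> rfl
    have hc₁q : c₁.q = x := by
      rw [hc1def]; split_ifs with h
      · exact h.symm
      · rcases hxq with h' | h'
        · exact absurd h' h
        · rw [flip_q]; exact h'.symm
    have hd₁p : (d₁.p.1, !d₁.p.2) = y := by
      rw [hd1def]; split_ifs with h
      · exact h.symm
      · rcases hyq with h' | h'
        · rw [flip_p]; simp [h']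
        · exact absurd h' h
    have hc₁abs : ∀ u v : V, |(c₁.f u : ℤ) - c₁.f v| = |(c.f u : ℤ) - c.f v| := by
      intro u v; rw [hc1def]; split_ifs
      · rfl
      · exact flip_abs (hgood c hcL) u v
    have hd₁abs : ∀ u v : V, |(d₁.f u : ℤ) - d₁.f v| = |(d.f u : ℤ) - d.f v| := by
      intro u v; rw [hd1def]; split_ifs
      · rfl
      · exact flip_abs (hgood d hdL) u v
    have hc₁set : ∀ z : Fin τ × Bool, (z = c.q ∨ z = (c.p.1, !c.p.2)) →
        (z = c₁.q ∨ z = (c₁.p.1, !c₁.p.2)) := by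
      intro z hz
      rw [hc1def]; split_ifs
      · exact hz
      · rcases hz with h | h
        · right; rw [flip_p]; simp [h]
        · left; rw [flip_q]; exact h
    have hd₁set : ∀ z : Fin τ × Bool, (z = d.q ∨ z = (d.p.1, !d.p.2)) →
        (z = d₁.q ∨ z = (d₁.p.1, !d₁.p.2)) := by
      intro z hz
      rw [hd1def]; split_ifs
      · exact hz
      · rcases hz with h | h
        · right; rw [flip_p]; simp [h]
        · left; rw [flip_q]; exact h
    have hlink : ∀ v, μ v d₁.p.1 = d₁.p.2 → μ v c₁.q.1 = c₁.q.2 := by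
      intro v hv
      have hy1 : y.1 = d₁.p.1 := by rw [← hd₁p]
      have hy2 : y.2 = !d₁.p.2 := by rw [← hd₁p]
      have h1 : μ v y.1 ≠ y.2 := by
        rw [hy1, hy2]
        intro hcontra
        exact (bool_eq_not hcontra) hv
      rw [hc₁q]
      exact huniv v h1
    set m := merge c₁ d₁ with hmdef
    have hmI : m.I = c.I ∪ d.I := by rw [hmdef, merge_I, hc₁I, hd₁I]
    have hdisj₁ : Disjoint c₁.I d₁.I := by rw [hc₁I, hd₁I]; exact hcdDisj
    have hmgood : Good μ m := merge_good hc₁good hd₁good hdisj₁ hlink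
    -- new invariants
    have hgoodNew : ∀ c' ∈ m :: L₀, Good μ c' := by
      intro c' hc'
      rcases List.mem_cons.mp hc' with rfl | h
      · exact hmgood
      · exact hgood c' ((hmemP c').mpr (List.mem_cons_of_mem _ (List.mem_cons_of_mem _ h)))
    have hdisjNew : List.Pairwise (fun a b => Disjoint a.I b.I) (m :: L₀) := by
      rw [List.pairwise_cons]
      refine ⟨?_, hdisj4⟩
      intro a ha
      rw [hmI, Finset.disjoint_union_left]
      exact ⟨hhd1 a (List.mem_cons_of_mem d ha), hhd2 a ha⟩
    have hcoverNew : ∀ i : Fin τ, ∃ c' ∈ m :: L₀, i ∈ c'.I := by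
      intro i
      obtain ⟨a, haL, hai⟩ := hcover i
      rw [hmemP] at haL
      rcases List.mem_cons.mp haL with rfl | haL'
      · exact ⟨m, List.mem_cons_self, by rw [hmI]; exact Finset.mem_union_left _ hai⟩
      rcases List.mem_cons.mp haL' with rfl | haL''
      · exact ⟨m, List.mem_cons_self, by rw [hmI]; exact Finset.mem_union_right _ hai⟩
      · exact ⟨a, List.mem_cons_of_mem _ haL'', hai⟩
    have hedgeNew : ∀ e' ∈ M.erase (s(x, y)), e' ∈ (semicubeGraph μ).edgeSet :=
      fun e' he' => hedge _ (Finset.mem_of_mem_erase he')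
    have hmatchNew : ∀ e' ∈ M.erase (s(x, y)), ∀ f' ∈ M.erase (s(x, y)),
        e' ≠ f' → ∀ a, a ∈ e' → a ∉ f' :=
      fun e' he' f' hf' hne' => hmatch _ (Finset.mem_of_mem_erase he') _
        (Finset.mem_of_mem_erase hf') hne'
    have hattachNew : ∀ e' ∈ M.erase (s(x, y)), ∀ z, z ∈ e' → ∀ c' ∈ m :: L₀,
        z.1 ∈ c'.I → (z = c'.q ∨ z = (c'.p.1, !c'.p.2)) := by
      intro e' he' z hz c' hc' hzc'
      have he'M := Finset.mem_of_mem_erase he'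
      have hee' : s(x, y) ≠ e' := (Finset.ne_of_mem_erase he').symm
      rcases List.mem_cons.mp hc' with rfl | hc'0
      · have hzx : z ≠ x := by
          intro h
          exact (hmatch _ he _ he'M hee' x (Sym2.mem_mk_left x y)) (h ▸ hz)
        have hzy : z ≠ y := by
          intro h
          exact (hmatch _ he _ he'M hee' y (Sym2.mem_mk_right x y)) (h ▸ hz)
        rw [hmI, Finset.mem_union] at hzc'
        rcases hzc' with h | h
        · rcases hc₁set z (hattach _ he'M z hz c hcL h) with h' | h'
          · exact absurd (h'.trans hc₁q) hzx
          · right; rw [hmdef, merge_p]; exact h'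
        · rcases hd₁set z (hattach _ he'M z hz d hdL h) with h' | h'
          · left; rw [hmdef, merge_q]; exact h'
          · exact absurd (h'.trans hd₁p) hzy
      · exact hattach _ he'M z hz c'
          ((hmemP c').mpr (List.mem_cons_of_mem _ (List.mem_cons_of_mem _ hc'0))) hzc'
    obtain ⟨L', hlen, hsum⟩ := ih (M.erase (s(x, y))) (m :: L₀)
      (by rw [Finset.card_erase_of_mem he, hcard]; omega) hgoodNew hdisjNew hcoverNew
      hedgeNew hmatchNew hattachNew
    refine ⟨L', ?_, ?_⟩
    · have hPlen := P.length_eq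
      have hEc : (M.erase s(x, y)).card = n := by
        rw [Finset.card_erase_of_mem he, hcard]; omega
      rw [hEc] at hlen
      simp only [List.length_cons] at hPlen hlen ⊢
      omega
    · intro u v
      rw [hsum u v]
      have hm : |(m.f u : ℤ) - m.f v|
          = |(c.f u : ℤ) - c.f v| + |(d.f u : ℤ) - d.f v| := by
        rw [hmdef, merge_abs hc₁good hd₁good hlink u v, hc₁abs, hd₁abs]
      have hPsum := (P.map (fun c' : ChainAux V τ => |(c'.f u : ℤ) - c'.f v|)).sum_eq
      simp only [List.map_cons, List.sum_cons] at hPsum ⊢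
      rw [hm, hPsum]
      ring

end ChainAux

/-- **Lemma 6.** If `G` is a finite connected graph with a full-dimensional
hypercube isometry `μ : V → {0,1}^τ`, and `M` is any matching in the semicube
graph `Sc(G)`, then `G` has an isometric embedding `λ : V → ℤ^d` into the
integer lattice with `d = τ − |M|`. -/
theorem lattice_embedding_from_matching
    {V : Type*} [Fintype V] [DecidableEq V]
    (G : SimpleGraph V) (hconn : G.Connected)
    (τ : ℕ) (μ : V → Fin τ → Bool)
    (hiso : ∀ u v : V, hammingDist (μ u) (μ v) = G.dist u v)
    (hfull : ∀ i : Fin τ, (∃ v, μ v i = false) ∧ (∃ v, μ v i = true))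
    (M : Finset (Sym2 (Fin τ × Bool)))
    (hM : IsMatchingIn (semicubeGraph μ) M) :
    ∃ lam : V → Fin (τ - M.card) → ℤ,
      ∀ u v : V, ∑ i, |lam u i - lam v i| = (G.dist u v : ℤ) := by
  classical
  obtain ⟨hMedge, hMmat⟩ := hM
  set L0 : List (ChainAux V τ) :=
    (List.finRange τ).map
      (fun i => ⟨fun v => if μ v i then 1 else 0, (i, true), (i, true), {i}⟩) with hL0
  have hlen0 : L0.length = τ := by simp [hL0]
  have hgood0 : ∀ c ∈ L0, ChainAux.Good μ c := by
    intro c hc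
    rw [hL0, List.mem_map] at hc
    obtain ⟨i, _, rfl⟩ := hc
    refine ⟨Finset.singleton_nonempty i, ?_, ?_, ?_⟩
    · intro v hv
      simp only at hv
      simp [hv]
    · intro v hv
      simp only [Bool.not_eq_true] at hv
      simp [hv]
    · intro v
      simp only [Finset.card_singleton]
      split <;> omega
  have hdisj0 : List.Pairwise (fun a b => Disjoint a.I b.I) L0 := by
    rw [hL0, List.pairwise_map]
    exact (List.nodup_finRange τ).imp (fun h => Finset.disjoint_singleton.mpr h)
  have hcover0 : ∀ i : Fin τ, ∃ c ∈ L0, i ∈ c.I := by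
    intro i
    exact ⟨_, by rw [hL0]; exact List.mem_map.mpr ⟨i, List.mem_finRange i, rfl⟩,
      Finset.mem_singleton_self i⟩
  have hattach0 : ∀ e ∈ M, ∀ z, z ∈ e → ∀ c ∈ L0, z.1 ∈ c.I →
      (z = c.q ∨ z = (c.p.1, !c.p.2)) := by
    intro e he z hz c hc hzc
    rw [hL0, List.mem_map] at hc
    obtain ⟨i, _, rfl⟩ := hc
    simp only [Finset.mem_singleton] at hzc
    cases hb : z.2
    · right
      exact Prod.ext hzc (by simp [hb])
    · left
      exact Prod.ext hzc hb
  obtain ⟨L', hlen, hsum⟩ := ChainAux.main μ M.card M L0 rfl hgood0 hdisj0 hcover0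
    hMedge hMmat hattach0
  rw [hlen0] at hlen
  have hlen' : L'.length = τ - M.card := by omega
  refine ⟨fun v j => ((L'.get (Fin.cast hlen'.symm j)).f v : ℤ), ?_⟩
  intro u v
  have hcast : ∑ j : Fin (τ - M.card),
      |((L'.get (Fin.cast hlen'.symm j)).f u : ℤ) - ((L'.get (Fin.cast hlen'.symm j)).f v : ℤ)|
      = ∑ j : Fin L'.length, |((L'.get j).f u : ℤ) - ((L'.get j).f v : ℤ)| := by
    apply Fintype.sum_equiv (finCongr hlen'.symm)
    intro j
    rfl
  rw [hcast]
  have hlist : ∑ j : Fin L'.length, |((L'.get j).f u : ℤ) - ((L'.get j).f v : ℤ)|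
      = (L'.map (fun c => |(c.f u : ℤ) - c.f v|)).sum := by
    rw [Fin.sum_univ_def]
    rw [show (fun j : Fin L'.length => |((L'.get j).f u : ℤ) - ((L'.get j).f v : ℤ)|)
        = (fun c : ChainAux V τ => |(c.f u : ℤ) - c.f v|) ∘ L'.get from rfl]
    rw [← List.map_map, List.map_get_finRange]
  rw [hlist, hsum u v]
  have hsum0 : (L0.map (fun c => |(c.f u : ℤ) - c.f v|)).sum
      = (hammingDist (μ u) (μ v) : ℤ) := by
    rw [hL0, List.map_map, ← Fin.sum_univ_def]
    have h1 : ∀ i : Fin τ,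
        ((fun c : ChainAux V τ => |(c.f u : ℤ) - c.f v|) ∘
          (fun i : Fin τ =>
            (⟨fun v => if μ v i then 1 else 0, (i, true), (i, true), {i}⟩ : ChainAux V τ))) i
        = if μ u i ≠ μ v i then (1 : ℤ) else 0 := by
      intro i
      simp only [Function.comp_apply]
      show |((if μ u i then 1 else 0 : ℕ) : ℤ) - ((if μ v i then 1 else 0 : ℕ) : ℤ)| = _
      cases hA : μ u i <;> cases hB : μ v i <;> norm_num
    rw [Finset.sum_congr rfl (fun i _ => h1 i), Finset.sum_boole]
    norm_cast
  rw [hsum0, hiso u v]
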